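/- Let H = (V, E) be a finite simple graph, let k ≥ 1, and let v_1, v_2 ∈ V be two non-adjacent vertices such that the maximum number of internally vertex-disjoint paths between v_1 and v_2 in H is r ≤ k−1. Let F be any set of vertex pairs such that for every {u, w} ∈ F, the vertices u and w are k-connected in H (i.e., H contains k internally vertex-disjoint u–w paths). Then the maximum number of internally vertex-disjoint paths between v_1 and v_2 in the graph (V, E ∪ F) is still r. -/

import Mathlib

/-- `IsSpanningTreeOn S T` : `T` is the edge set of a spanning tree of the complete
graph on the vertex set `S`: all edges of `T` are non-loop edges with both endpoints
in `S`, all vertices of `S` are pairwise connected using edges of `T`, and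
`|T| = |S| - 1`. -/
def IsSpanningTreeOn {V : Type*} [Fintype V] [DecidableEq V]
    (S : Finset V) (T : Finset (Sym2 V)) : Prop :=
  (∀ e ∈ T, ¬ e.IsDiag ∧ ∀ v ∈ e, v ∈ S) ∧
  (∀ u ∈ S, ∀ v ∈ S, (SimpleGraph.fromEdgeSet (↑T : Set (Sym2 V))).Reachable u v) ∧
  T.card + 1 = S.card

/-- The edge set of the (unique, since weights are injective) minimum spanning tree of
the complete graph on the vertex set `S` with edge weights `w`: the set of edges
belonging to some minimum-weight spanning tree on `S`. -/
def mstEdges {V : Type*} [Fintype V] [DecidableEq V] (w : Sym2 V → ℝ) (S : Finset V) :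
    Set (Sym2 V) :=
  {e | ∃ T : Finset (Sym2 V), IsSpanningTreeOn S T ∧
        (∀ T' : Finset (Sym2 V), IsSpanningTreeOn S T' → T.sum w ≤ T'.sum w) ∧ e ∈ T}

/-- `Mk w k` = `M_k(G)`: the union of the edge sets of the minimum spanning trees of all
induced subgraphs of the complete graph on `V` obtained by deleting `k - 1` vertices. -/
def Mk {V : Type*} [Fintype V] [DecidableEq V] (w : Sym2 V → ℝ) (k : ℕ) : Set (Sym2 V) :=
  {e | ∃ X : Finset V, X.card = k - 1 ∧ e ∈ mstEdges w (Finset.univ \ X)}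

/-- Two walks from `u` to `v` are internally disjoint if the only vertices they share
are `u` and `v`. -/
def InternallyDisjoint {V : Type*} {G : SimpleGraph V} {u v : V}
    (p q : G.Walk u v) : Prop :=
  ∀ x, x ∈ p.support → x ∈ q.support → x = u ∨ x = v

/-- `HasDisjointPaths G u v k` : `G` contains (at least) `k` pairwise internally
vertex-disjoint paths between `u` and `v`. -/
def HasDisjointPaths {V : Type*} (G : SimpleGraph V) (u v : V) (k : ℕ) : Prop :=
  ∃ P : Fin k → G.Walk u v, (∀ i, (P i).IsPath) ∧
    Pairwise fun i j => InternallyDisjoint (P i) (P j)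

/-- `IsConstructionOrder k G l` : the list `l` enumerates the edges of `G` without
repetition, and each edge joins two vertices between which the graph formed by the
previous edges has at most `k - 1` internally vertex-disjoint paths. -/
def IsConstructionOrder {V : Type*} [DecidableEq V] (k : ℕ) (G : SimpleGraph V)
    (l : List (Sym2 V)) : Prop :=
  l.Nodup ∧ (↑l.toFinset : Set (Sym2 V)) = G.edgeSet ∧
  ∀ (i : ℕ) (h : i < l.length) (u v : V), l.get ⟨i, h⟩ = s(u, v) →
    ¬ HasDisjointPaths (SimpleGraph.fromEdgeSet (↑(l.take i).toFinset)) u v k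

/-- A graph is `k`-constructible if it admits a `k`-construction order of its edges. -/
def IsKConstructible {V : Type*} [DecidableEq V] (k : ℕ) (G : SimpleGraph V) : Prop :=
  ∃ l : List (Sym2 V), IsConstructionOrder k G l

/-- A graph is `k`-(vertex-)connected: it has more than `k` vertices and deleting any
fewer than `k` vertices leaves a connected graph. -/
def IsKConnectedGraph {V : Type*} [Fintype V] [DecidableEq V]
    (k : ℕ) (G : SimpleGraph V) : Prop :=
  k < Fintype.card V ∧
  ∀ S : Finset V, S.card < k → (G.induce ((↑S : Set V)ᶜ)).Connected

/-- A graph is `k`-minimal if it is `k`-connected and deleting any single edge destroys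
`k`-connectivity. -/
def IsKMinimal {V : Type*} [Fintype V] [DecidableEq V]
    (k : ℕ) (G : SimpleGraph V) : Prop :=
  IsKConnectedGraph k G ∧ ∀ e ∈ G.edgeSet, ¬ IsKConnectedGraph k (G.deleteEdges {e})

set_option linter.unusedSectionVars false
set_option linter.unusedVariables false
set_option maxHeartbeats 1000000


namespace Stmt12

open SimpleGraph

variable {V : Type*} [Fintype V] [DecidableEq V]

/-- `S` separates `A` from `B` in `G`: every walk from `A` to `B` meets `S`. -/
def Sep (G : SimpleGraph V) (A B S : Finset V) : Prop :=
  ∀ ⦃p q : V⦄ (w : G.Walk p q), p ∈ A → q ∈ B → ∃ s ∈ S, s ∈ w.support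

/-- `k` fully-disjoint `A`–`B` paths in `G`. -/
def Conn (G : SimpleGraph V) (A B : Finset V) (k : ℕ) : Prop :=
  ∃ (p q : Fin k → V) (W : ∀ i, G.Walk (p i) (q i)),
    (∀ i, p i ∈ A) ∧ (∀ i, q i ∈ B) ∧ (∀ i, (W i).IsPath) ∧
    ∀ i j, i ≠ j → ∀ v, v ∈ (W i).support → v ∈ (W j).support → False

lemma sep_symm {G : SimpleGraph V} {A B S : Finset V} (h : Sep G A B S) : Sep G B A S := by
  intro p q w hp hq
  obtain ⟨s, hs, hmem⟩ := h w.reverse hq hp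
  exact ⟨s, hs, by simpa [Walk.support_reverse] using hmem⟩

lemma conn_mono_graph {G G' : SimpleGraph V} (hle : G ≤ G') {A B : Finset V} {k : ℕ}
    (h : Conn G A B k) : Conn G' A B k := by
  obtain ⟨p, q, W, hA, hB, hP, hD⟩ := h
  refine ⟨p, q, fun i => (W i).transfer G' (fun e he => edgeSet_mono hle ((W i).edges_subset_edgeSet he)), hA, hB,
    fun i => (hP i).transfer _, ?_⟩
  intro i j hij v hv hw
  rw [Walk.support_transfer] at hv hw
  exact hD i j hij v hv hw

lemma conn_mono_k {G : SimpleGraph V} {A B : Finset V} {k k' : ℕ} (hk : k' ≤ k)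
    (h : Conn G A B k) : Conn G A B k' := by
  obtain ⟨p, q, W, hA, hB, hP, hD⟩ := h
  refine ⟨fun i => p (Fin.castLE hk i), fun i => q (Fin.castLE hk i),
    fun i => W (Fin.castLE hk i), fun i => hA _, fun i => hB _, fun i => hP _, ?_⟩
  intro i j hij v hv hw
  exact hD _ _ (by simpa using (Fin.castLE_injective hk).ne hij) v hv hw

/-- first hit of `X` along a walk. -/
lemma exists_prefix {G : SimpleGraph V} (X : Finset V) :
    ∀ {p q : V} (w : G.Walk p q), (∃ t ∈ X, t ∈ w.support) →
    ∃ t ∈ X, ∃ w' : G.Walk p t,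
      (∀ v ∈ w'.support, v ∈ w.support) ∧ (∀ e ∈ w'.edges, e ∈ w.edges) ∧
      (∀ v ∈ w'.support, v ∈ X → v = t) ∧ (w.IsPath → w'.IsPath) := by
  intro p q w
  induction w with
  | nil =>
    intro h
    obtain ⟨t, htX, hts⟩ := h
    simp only [Walk.support_nil, List.mem_singleton] at hts
    subst hts
    exact ⟨t, htX, Walk.nil, by simp, by simp, by simp, fun _ => Walk.IsPath.nil⟩
  | @cons u b q hub w ih =>
    intro h
    by_cases hpX : u ∈ X
    · refine ⟨u, hpX, Walk.nil, by simp, by simp, by simp, fun _ => Walk.IsPath.nil⟩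
    · obtain ⟨t, htX, hts⟩ := h
      have hts' : t ∈ w.support := by
        rcases (by simpa using hts : t = u ∨ t ∈ w.support) with rfl | h'
        · exact absurd htX hpX
        · exact h'
      obtain ⟨t', ht'X, w', hsup, hedge, honce, hpath⟩ := ih ⟨t, htX, hts'⟩
      refine ⟨t', ht'X, Walk.cons hub w', ?_, ?_, ?_, ?_⟩
      · intro v hv
        rcases (by simpa using hv : v = u ∨ v ∈ w'.support) with rfl | h'
        · simp
        · simp [hsup v h']
      · intro e he
        rcases (by simpa using he : e = s(u, b) ∨ e ∈ w'.edges) with rfl | h'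
        · simp
        · simp [hedge e h']
      · intro v hv hvX
        rcases (by simpa using hv : v = u ∨ v ∈ w'.support) with rfl | h'
        · exact absurd hvX hpX
        · exact honce v h' hvX
      · intro hP
        rw [Walk.cons_isPath_iff] at hP ⊢
        exact ⟨hpath hP.1, fun hu => hP.2 (hsup u hu)⟩


/-- Contract the edge `xy`: merge `y` into `x`, leaving `y` isolated. -/
def contract (G : SimpleGraph V) (x y : V) : SimpleGraph V where
  Adj u w := u ≠ w ∧ u ≠ y ∧ w ≠ y ∧
    (G.Adj u w ∨ (u = x ∧ G.Adj y w) ∨ (w = x ∧ G.Adj u y))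
  symm := ⟨by
    intro u w ⟨h1, h2, h3, h4⟩
    refine ⟨h1.symm, h3, h2, ?_⟩
    rcases h4 with h | ⟨rfl, h⟩ | ⟨rfl, h⟩
    · exact Or.inl h.symm
    · exact Or.inr (Or.inr ⟨rfl, h.symm⟩)
    · exact Or.inr (Or.inl ⟨rfl, h.symm⟩)⟩
  loopless := ⟨fun u h => h.1 rfl⟩

variable {G : SimpleGraph V} {x y : V}

/-- the merge map. -/
def cf (x y : V) : V → V := fun v => if v = y then x else v

lemma cf_ne_y (hxy : x ≠ y) (v : V) : cf x y v ≠ y := by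
  unfold cf; split <;> simp_all

lemma cf_eq (v : V) : cf x y v = v ∨ (v = y ∧ cf x y v = x) := by
  unfold cf; split <;> simp_all

lemma contract_support_ne_y (hxy : x ≠ y) :
    ∀ {u z : V} (w : (contract G x y).Walk u z), u ≠ y → ∀ t ∈ w.support, t ≠ y := by
  intro u z w
  induction w with
  | nil => intro hu t ht; simp at ht; subst ht; exact hu
  | cons h w ih =>
    intro hu t ht
    rcases (by simpa using ht) with rfl | ht'
    · exact hu
    · exact ih h.2.2.1 t ht'

/-- Walks project to the contraction. -/
lemma contract_walk (hxy : G.Adj x y) :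
    ∀ {u z : V} (w : G.Walk u z),
    ∃ w₁ : (contract G x y).Walk (cf x y u) (cf x y z),
      ∀ t ∈ w₁.support, ∃ r ∈ w.support, t = cf x y r := by
  have hne : x ≠ y := hxy.ne
  intro u z w
  induction w with
  | nil => exact ⟨Walk.nil, by simp⟩
  | @cons u b z hub w ih =>
    obtain ⟨w₁, hw₁⟩ := ih
    by_cases hfe : cf x y u = cf x y b
    · refine ⟨w₁.copy hfe.symm rfl, ?_⟩
      intro t ht
      rw [Walk.support_copy] at ht
      obtain ⟨r, hr, hr'⟩ := hw₁ t ht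
      exact ⟨r, by simp [hr], hr'⟩
    · have hadj : (contract G x y).Adj (cf x y u) (cf x y b) := by
        refine ⟨hfe, cf_ne_y hne u, cf_ne_y hne b, ?_⟩
        by_cases hu : u = y <;> by_cases hb : b = y
        · exact absurd (by simp [cf, hu, hb]) hfe
        · have h1 : cf x y u = x := by simp [cf, hu]
          have h2 : cf x y b = b := by simp [cf, hb]
          rw [h1, h2]
          exact Or.inr (Or.inl ⟨rfl, hu ▸ hub⟩)
        · have h1 : cf x y u = u := by simp [cf, hu]
          have h2 : cf x y b = x := by simp [cf, hb]
          rw [h1, h2]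
          exact Or.inr (Or.inr ⟨rfl, hb ▸ hub⟩)
        · have h1 : cf x y u = u := by simp [cf, hu]
          have h2 : cf x y b = b := by simp [cf, hb]
          rw [h1, h2]
          exact Or.inl hub
      refine ⟨Walk.cons hadj w₁, ?_⟩
      intro t ht
      rcases (by simpa using ht) with rfl | ht'
      · exact ⟨u, by simp, rfl⟩
      · obtain ⟨r, hr, hr'⟩ := hw₁ t ht'
        exact ⟨r, by simp [hr], hr'⟩

lemma sep_contract_of_not_mem (hxy : G.Adj x y) {A B Z : Finset V}
    (hZ : Sep (contract G x y) (A.image (cf x y)) (B.image (cf x y)) Z) (hx : x ∉ Z) :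
    Sep G A B Z := by
  intro p q w hp hq
  obtain ⟨w₁, hw₁⟩ := contract_walk hxy w
  obtain ⟨s, hs, hmem⟩ := hZ w₁ (Finset.mem_image_of_mem _ hp) (Finset.mem_image_of_mem _ hq)
  obtain ⟨r, hr, hr'⟩ := hw₁ s hmem
  rcases cf_eq (x := x) (y := y) r with h | ⟨hy, h⟩
  · exact ⟨s, hs, by rwa [hr', h]⟩
  · rw [hr', h] at hs; exact absurd hs hx

lemma sep_contract_insert (hxy : G.Adj x y) {A B Z : Finset V}
    (hZ : Sep (contract G x y) (A.image (cf x y)) (B.image (cf x y)) Z) :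
    Sep G A B (insert y Z) := by
  intro p q w hp hq
  obtain ⟨w₁, hw₁⟩ := contract_walk hxy w
  obtain ⟨s, hs, hmem⟩ := hZ w₁ (Finset.mem_image_of_mem _ hp) (Finset.mem_image_of_mem _ hq)
  obtain ⟨r, hr, hr'⟩ := hw₁ s hmem
  rcases cf_eq (x := x) (y := y) r with h | ⟨hy, h⟩
  · exact ⟨s, Finset.mem_insert_of_mem hs, by rwa [hr', h]⟩
  · exact ⟨y, Finset.mem_insert_self _ _, hy ▸ hr⟩



lemma contract_edge_not_y (hxy : x ≠ y) {z : Sym2 V} (hz : z ∈ (contract G x y).edgeSet) :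
    y ∉ z := by
  induction z using Sym2.ind with
  | _ u w =>
    rw [SimpleGraph.mem_edgeSet] at hz
    obtain ⟨h1, h2, h3, _⟩ := hz
    rw [Sym2.mem_iff]
    rintro (rfl | rfl)
    · exact h2 rfl
    · exact h3 rfl

lemma contract_edge_virtual {z : Sym2 V} (hz : z ∈ (contract G x y).edgeSet)
    (hz' : z ∉ G.edgeSet) : ∃ w, w ≠ x ∧ w ≠ y ∧ z = s(x, w) ∧ G.Adj y w := by
  induction z using Sym2.ind with
  | _ u w =>
    rw [SimpleGraph.mem_edgeSet] at hz hz'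
    obtain ⟨h1, h2, h3, hd⟩ := hz
    rcases hd with h | ⟨rfl, h⟩ | ⟨rfl, h⟩
    · exact absurd h hz'
    · exact ⟨w, fun hw => h1 hw.symm, h3, rfl, h⟩
    · exact ⟨u, fun hu => h1 hu, h2, Sym2.eq_swap, h.symm⟩

lemma contract_edges_lt (hxy : G.Adj x y) :
    ((contract G x y).edgeSet).ncard < G.edgeSet.ncard := by
  classical
  have hne : x ≠ y := hxy.ne
  set g : V → V := fun v => if v = x then y else v with hg
  set φ : Sym2 V → Sym2 V := fun z => if z ∈ G.edgeSet then z else Sym2.map g z with hφ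
  have hmaps : ∀ z ∈ (contract G x y).edgeSet, φ z ∈ G.edgeSet \ {s(x, y)} := by
    intro z hz
    by_cases hzE : z ∈ G.edgeSet
    · refine ⟨by simp [hφ, hzE], ?_⟩
      simp only [Set.mem_singleton_iff]
      intro hcon
      rw [hφ] at hcon
      simp only [hzE, if_pos] at hcon
      exact contract_edge_not_y hne hz (hcon ▸ (by simp : y ∈ s(x, y)))
    · obtain ⟨w, hwx, hwy, rfl, hadj⟩ := contract_edge_virtual hz hzE
      have hmap : φ s(x, w) = s(y, w) := by
        simp only [hφ, hzE, if_neg, not_false_iff, Sym2.map_pair_eq]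
        simp [hg, hwx]
      rw [hmap]
      constructor
      · exact hadj
      · simp only [Set.mem_singleton_iff]
        intro hcon
        rw [Sym2.eq_iff] at hcon
        rcases hcon with ⟨h1, h2⟩ | ⟨h1, h2⟩
        · exact hne h1.symm
        · exact hwx h2
  have hinj : Set.InjOn φ (contract G x y).edgeSet := by
    intro z1 hz1 z2 hz2 heq
    by_cases h1 : z1 ∈ G.edgeSet <;> by_cases h2 : z2 ∈ G.edgeSet
    · simpa [hφ, h1, h2] using heq
    · obtain ⟨w, hwx, hwy, rfl, hadj⟩ := contract_edge_virtual hz2 h2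
      have : φ s(x, w) = s(y, w) := by
        simp only [hφ, h2, if_neg, not_false_iff, Sym2.map_pair_eq]
        simp [hg, hwx]
      rw [this] at heq
      simp only [hφ, h1, if_pos] at heq
      exact absurd (heq ▸ (by simp : y ∈ s(y, w))) (contract_edge_not_y hne hz1)
    · obtain ⟨w, hwx, hwy, rfl, hadj⟩ := contract_edge_virtual hz1 h1
      have : φ s(x, w) = s(y, w) := by
        simp only [hφ, h1, if_neg, not_false_iff, Sym2.map_pair_eq]
        simp [hg, hwx]
      rw [this] at heq
      simp only [hφ, h2, if_pos] at heq
      exact absurd (heq ▸ (by simp : y ∈ s(y, w))) (contract_edge_not_y hne hz2)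
    · obtain ⟨w1, hw1x, hw1y, rfl, hadj1⟩ := contract_edge_virtual hz1 h1
      obtain ⟨w2, hw2x, hw2y, rfl, hadj2⟩ := contract_edge_virtual hz2 h2
      have e1 : φ s(x, w1) = s(y, w1) := by
        simp only [hφ, h1, if_neg, not_false_iff, Sym2.map_pair_eq]
        simp [hg, hw1x]
      have e2 : φ s(x, w2) = s(y, w2) := by
        simp only [hφ, h2, if_neg, not_false_iff, Sym2.map_pair_eq]
        simp [hg, hw2x]
      rw [e1, e2, Sym2.eq_iff] at heq
      rcases heq with ⟨h1', h2'⟩ | ⟨h1', h2'⟩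
      · rw [h2']
      · exact absurd h1'.symm hw2y
  calc ((contract G x y).edgeSet).ncard ≤ (G.edgeSet \ {s(x, y)}).ncard :=
        Set.ncard_le_ncard_of_injOn φ hmaps hinj (Set.toFinite _)
    _ < G.edgeSet.ncard := Set.ncard_diff_singleton_lt_of_mem hxy (Set.toFinite _)


/-- Lift a walk of the contraction back to `G`. -/
lemma lift_walk (hxy : G.Adj x y) :
    ∀ {u z : V} (w : (contract G x y).Walk u z) (u' : V),
    (u' = u ∨ (u = x ∧ u' = y)) →
    ∃ (z' : V), (z' = z ∨ (z = x ∧ z' = y)) ∧ ∃ (w' : G.Walk u' z'),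
      ∀ t ∈ w'.support, t ∈ w.support ∨ (x ∈ w.support ∧ (t = x ∨ t = y)) := by
  intro u z w
  induction w with
  | nil =>
    intro u' hu'
    refine ⟨u', hu', Walk.nil, ?_⟩
    intro t ht
    simp only [Walk.support_nil, List.mem_singleton] at ht
    subst ht
    rcases hu' with rfl | ⟨rfl, rfl⟩
    · exact Or.inl (by simp)
    · exact Or.inr ⟨by simp, Or.inr rfl⟩
  | @cons u b z h w ih =>
    intro u' hu'
    obtain ⟨hne, huy, hby, hd⟩ := id h
    have step : ∃ (b' : V), (b' = b ∨ (b = x ∧ b' = y)) ∧ ∃ σ : G.Walk u' b',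
        ∀ t ∈ σ.support, (t = u ∨ t = b) ∨ (u = x ∨ b = x) ∧ (t = x ∨ t = y) := by
      rcases hu' with rfl | ⟨rfl, rfl⟩
      · rcases hd with hG | ⟨rfl, hG⟩ | ⟨rfl, hG⟩
        · refine ⟨b, Or.inl rfl, Walk.cons hG Walk.nil, ?_⟩
          intro t ht
          simp only [Walk.support_cons, Walk.support_nil, List.mem_cons,
            List.mem_singleton, List.not_mem_nil, or_false] at ht
          rcases ht with rfl | rfl
          · exact Or.inl (Or.inl rfl)
          · exact Or.inl (Or.inr rfl)
        · refine ⟨b, Or.inl rfl, Walk.cons hxy (Walk.cons hG Walk.nil), ?_⟩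
          intro t ht
          simp only [Walk.support_cons, Walk.support_nil, List.mem_cons,
            List.mem_singleton, List.not_mem_nil, or_false] at ht
          rcases ht with rfl | rfl | rfl
          · exact Or.inl (Or.inl rfl)
          · exact Or.inr ⟨Or.inl rfl, Or.inr rfl⟩
          · exact Or.inl (Or.inr rfl)
        · refine ⟨y, Or.inr ⟨rfl, rfl⟩, Walk.cons hG Walk.nil, ?_⟩
          intro t ht
          simp only [Walk.support_cons, Walk.support_nil, List.mem_cons,
            List.mem_singleton, List.not_mem_nil, or_false] at ht
          rcases ht with rfl | rfl
          · exact Or.inl (Or.inl rfl)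
          · exact Or.inr ⟨Or.inr rfl, Or.inr rfl⟩
      · rcases hd with hG | ⟨heq, hG⟩ | ⟨rfl, hG⟩
        · refine ⟨b, Or.inl rfl, Walk.cons hxy.symm (Walk.cons hG Walk.nil), ?_⟩
          intro t ht
          simp only [Walk.support_cons, Walk.support_nil, List.mem_cons,
            List.mem_singleton, List.not_mem_nil, or_false] at ht
          rcases ht with rfl | rfl | rfl
          · exact Or.inr ⟨Or.inl rfl, Or.inr rfl⟩
          · exact Or.inl (Or.inl rfl)
          · exact Or.inl (Or.inr rfl)
        · refine ⟨b, Or.inl rfl, Walk.cons hG Walk.nil, ?_⟩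
          intro t ht
          simp only [Walk.support_cons, Walk.support_nil, List.mem_cons,
            List.mem_singleton, List.not_mem_nil, or_false] at ht
          rcases ht with rfl | rfl
          · exact Or.inr ⟨Or.inl rfl, Or.inr rfl⟩
          · exact Or.inl (Or.inr rfl)
        · exact absurd rfl hne
    obtain ⟨b', hb', σ, hσ⟩ := step
    obtain ⟨z', hz', rest, hrest⟩ := ih b' hb'
    refine ⟨z', hz', σ.append rest, ?_⟩
    intro t ht
    rw [Walk.mem_support_append_iff] at ht
    rcases ht with ht | ht
    · rcases hσ t ht with h' | ⟨hx', hty⟩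
      · rcases h' with rfl | rfl
        · exact Or.inl (by simp)
        · exact Or.inl (by simp [Walk.start_mem_support])
      · refine Or.inr ⟨?_, hty⟩
        rw [Walk.support_cons]
        rcases hx' with h'' | h''
        · exact List.mem_cons.mpr (Or.inl h''.symm)
        · refine List.mem_cons.mpr (Or.inr ?_)
          have hb := w.start_mem_support
          revert hb
          generalize w.support = L
          intro hb
          rwa [h''] at hb
    · rcases hrest t ht with h' | ⟨hx', hty⟩
      · exact Or.inl (by simp [h'])
      · exact Or.inr ⟨by simp [hx'], hty⟩

lemma mem_of_eq {α : Type*} {L : List α} {a b : α} (h : a ∈ L) (hab : a = b) : b ∈ L :=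
  hab ▸ h

lemma conn_contract (hxy : G.Adj x y) {A B : Finset V} {k : ℕ}
    (h : Conn (contract G x y) (A.image (cf x y)) (B.image (cf x y)) k) :
    Conn G A B k := by
  classical
  obtain ⟨p, q, W, hA, hB, hP, hD⟩ := h
  have hne : x ≠ y := hxy.ne
  have hpy : ∀ i, p i ≠ y := by
    intro i
    obtain ⟨a₀, _, hfa⟩ := Finset.mem_image.mp (hA i)
    rw [← hfa]
    exact cf_ne_y hne a₀
  have key : ∀ i, ∃ (a₀ b₀ : V) (P : G.Walk a₀ b₀), a₀ ∈ A ∧ b₀ ∈ B ∧ P.IsPath ∧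
      ∀ t ∈ P.support, t ∈ (W i).support ∨ (x ∈ (W i).support ∧ (t = x ∨ t = y)) := by
    intro i
    obtain ⟨a₀, ha₀, hfa⟩ := Finset.mem_image.mp (hA i)
    obtain ⟨b₀, hb₀, hfb⟩ := Finset.mem_image.mp (hB i)
    have hu' : a₀ = p i ∨ (p i = x ∧ a₀ = y) := by
      rcases cf_eq (x := x) (y := y) a₀ with h | ⟨h1, h2⟩
      · exact Or.inl (by rw [← hfa, h])
      · exact Or.inr ⟨by rw [← hfa, h2], h1⟩
    obtain ⟨z', hz', W', hsupW'⟩ := lift_walk hxy (W i) a₀ hu'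
    have hb' : b₀ = q i ∨ (q i = x ∧ b₀ = y) := by
      rcases cf_eq (x := x) (y := y) b₀ with h | ⟨h1, h2⟩
      · exact Or.inl (by rw [← hfb, h])
      · exact Or.inr ⟨by rw [← hfb, h2], h1⟩
    by_cases hzb : z' = b₀
    · refine ⟨a₀, b₀, (W'.copy rfl hzb).bypass, ha₀, hb₀, Walk.bypass_isPath _, ?_⟩
      intro t ht
      have := Walk.support_bypass_subset _ ht
      rw [Walk.support_copy] at this
      exact hsupW' t this
    · have hx_end : x ∈ (W i).support ∧ ((z' = x ∧ b₀ = y) ∨ (z' = y ∧ b₀ = x)) := by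
        rcases hz' with h1 | ⟨h1, h2⟩ <;> rcases hb' with h3 | ⟨h3, h4⟩
        · exact absurd (h1.trans h3.symm) hzb
        · exact ⟨mem_of_eq (W i).end_mem_support h3, Or.inl ⟨h1.trans h3, h4⟩⟩
        · exact ⟨mem_of_eq (W i).end_mem_support h1, Or.inr ⟨h2, h3.trans h1⟩⟩
        · exact absurd (h2.trans h4.symm) hzb
      obtain ⟨hxW, hc⟩ := hx_end
      have hbxy : b₀ = x ∨ b₀ = y := by
        rcases hc with ⟨_, h2⟩ | ⟨_, h2⟩
        · exact Or.inr h2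
        · exact Or.inl h2
      by_cases hbm : b₀ ∈ W'.support
      · refine ⟨a₀, b₀, (W'.takeUntil b₀ hbm).bypass, ha₀, hb₀, Walk.bypass_isPath _, ?_⟩
        intro t ht
        have := Walk.support_takeUntil_subset _ hbm (Walk.support_bypass_subset _ ht)
        exact hsupW' t this
      · have adj : G.Adj z' b₀ := by
          rcases hc with ⟨h1, h2⟩ | ⟨h1, h2⟩
          · rw [h1, h2]; exact hxy
          · rw [h1, h2]; exact hxy.symm
        refine ⟨a₀, b₀, (W'.concat adj).bypass, ha₀, hb₀, Walk.bypass_isPath _, ?_⟩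
        intro t ht
        have := Walk.support_bypass_subset _ ht
        rw [Walk.support_concat, List.mem_append] at this
        rcases this with h' | h'
        · exact hsupW' t h'
        · rw [List.mem_singleton] at h'
          subst h'
          exact Or.inr ⟨hxW, hbxy⟩
  choose a₀ b₀ P hA' hB' hP' hsup using key
  refine ⟨a₀, b₀, P, hA', hB', hP', ?_⟩
  intro i j hij v hv hw
  rcases hsup i v hv with h1 | ⟨hx1, ht1⟩ <;> rcases hsup j v hw with h2 | ⟨hx2, ht2⟩
  · exact hD i j hij v h1 h2
  · rcases ht2 with rfl | rfl
    · exact hD i j hij v h1 hx2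
    · exact contract_support_ne_y hne (W i) (hpy i) v h1 rfl
  · rcases ht1 with rfl | rfl
    · exact hD i j hij v hx1 h2
    · exact contract_support_ne_y hne (W j) (hpy j) v h2 rfl
  · exact hD i j hij x hx1 hx2

lemma start_not_mem_tail {a t : V} {P : G.Walk a t} (hP : P.IsPath) :
    a ∉ P.support.tail := by
  have h := hP.support_nodup
  rw [P.support_eq_cons] at h
  exact (List.nodup_cons.mp h).1

lemma end_not_mem_takeUntil {a t : V} {P : G.Walk a t} (hP : P.IsPath) {v : V}
    (hv : v ∈ P.support) (hvt : v ≠ t) : t ∉ (P.takeUntil v hv).support := by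
  intro hcon
  have hspec := P.take_spec hv
  have hnodup := hP.support_nodup
  rw [← hspec, Walk.support_append] at hnodup
  have hdisj := (List.nodup_append.mp hnodup).2.2
  have ht : t ∈ (P.dropUntil v hv).support := (P.dropUntil v hv).end_mem_support
  rw [(P.dropUntil v hv).support_eq_cons] at ht
  rcases List.mem_cons.mp ht with h | h
  · exact hvt h.symm
  · exact hdisj _ hcon _ h rfl

lemma start_not_mem_dropUntil {a t : V} {P : G.Walk a t} (hP : P.IsPath) {v : V}
    (hv : v ∈ P.support) (hva : v ≠ a) : a ∉ (P.dropUntil v hv).support := by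
  intro hcon
  have hspec := P.take_spec hv
  have hnodup := hP.support_nodup
  rw [← hspec, Walk.support_append] at hnodup
  have hdisj := (List.nodup_append.mp hnodup).2.2
  have ha : a ∈ (P.takeUntil v hv).support := (P.takeUntil v hv).start_mem_support
  rw [(P.dropUntil v hv).support_eq_cons] at hcon
  rcases List.mem_cons.mp hcon with h | h
  · exact hva h.symm
  · exact hdisj _ ha _ h rfl

lemma sep_of_paths {A B S : Finset V}
    (h : ∀ (p q : V) (P : G.Walk p q), P.IsPath → p ∈ A → q ∈ B → ∃ s ∈ S, s ∈ P.support) :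
    Sep G A B S := by
  intro p q w hp hq
  obtain ⟨s, hs, hm⟩ := h p q w.bypass (Walk.bypass_isPath w) hp hq
  exact ⟨s, hs, Walk.support_bypass_subset _ hm⟩

lemma edgeless_walk (hE : G.edgeSet = ∅) {p q : V} (w : G.Walk p q) :
    p = q ∧ w.support = [p] := by
  cases w with
  | nil => simp
  | cons h w =>
    exact absurd (G.mem_edgeSet.mpr h) (by simp [hE])

lemma conn_of_edgeless {A B : Finset V} {k : ℕ} (hE : G.edgeSet = ∅)
    (hsep : ∀ S, Sep G A B S → k ≤ S.card) : Conn G A B k := by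
  classical
  have hAB : Sep G A B (A ∩ B) := by
    intro p q w hp hq
    obtain ⟨rfl, hs⟩ := edgeless_walk hE w
    exact ⟨p, Finset.mem_inter.mpr ⟨hp, hq⟩, by simp [hs]⟩
  have hk : k ≤ (A ∩ B).card := hsep _ hAB
  set s := A ∩ B with hs
  set f : Fin k → V := fun i => ((s.equivFin.symm ⟨i, lt_of_lt_of_le i.2 hk⟩ : ↥s) : V)
    with hf
  have hfs : ∀ i, f i ∈ s := fun i => (s.equivFin.symm _).2
  have hfi : Function.Injective f := by
    intro i j hij
    have h1 := s.equivFin.symm.injective (Subtype.val_injective hij)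
    exact Fin.ext (by simpa using congrArg Fin.val h1)
  refine ⟨f, f, fun i => Walk.nil, fun i => (Finset.mem_inter.mp (hfs i)).1,
    fun i => (Finset.mem_inter.mp (hfs i)).2, fun i => Walk.IsPath.nil, ?_⟩
  intro i j hij v hv hw
  simp only [Walk.support_nil, List.mem_singleton] at hv hw
  exact hij (hfi (hv ▸ hw ▸ rfl : f i = f j))

theorem menger : ∀ (N : ℕ) (G : SimpleGraph V) (A B : Finset V) (k : ℕ),
    G.edgeSet.ncard ≤ N → (∀ S, Sep G A B S → k ≤ S.card) → Conn G A B k := by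
  intro N
  induction N with
  | zero =>
    intro G A B k hcard hsep
    have hE : G.edgeSet = ∅ := by
      rw [← Set.ncard_eq_zero (Set.toFinite _)]
      omega
    exact conn_of_edgeless hE hsep
  | succ N IH =>
    intro G A B k hcard hsep
    by_cases hE : G.edgeSet = ∅
    · exact conn_of_edgeless hE hsep
    · obtain ⟨e, he⟩ := Set.nonempty_iff_ne_empty.mpr hE
      induction e using Sym2.ind with
      | _ x y =>
      have hxy : G.Adj x y := G.mem_edgeSet.mp he
      have hne : x ≠ y := hxy.ne
      by_cases h₁ : ∀ Z, Sep (contract G x y) (A.image (cf x y)) (B.image (cf x y)) Z →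
          k ≤ Z.card
      · have hlt := contract_edges_lt (G := G) hxy
        have hNc : ((contract G x y).edgeSet).ncard ≤ N := by omega
        exact conn_contract hxy (IH (contract G x y) (A.image (cf x y)) (B.image (cf x y))
          k hNc h₁)
      · push_neg at h₁
        obtain ⟨Y₀, hY₀sep, hY₀card⟩ := h₁
        -- y is never on a walk of the contraction from A.image
        have hAy : ∀ p, p ∈ A.image (cf x y) → p ≠ y := by
          intro p hp
          obtain ⟨a₀, _, hfa⟩ := Finset.mem_image.mp hp
          rw [← hfa]; exact cf_ne_y hne a₀
        set Y := Y₀.erase y with hY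
        have hYsep : Sep (contract G x y) (A.image (cf x y)) (B.image (cf x y)) Y := by
          intro p q w hp hq
          obtain ⟨s, hs, hm⟩ := hY₀sep w hp hq
          have hsy : s ≠ y := contract_support_ne_y hne w (hAy p hp) s hm
          exact ⟨s, Finset.mem_erase.mpr ⟨hsy, hs⟩, hm⟩
        have hYy : y ∉ Y := Finset.notMem_erase _ _
        have hYcard : Y.card < k := lt_of_le_of_lt (Finset.card_erase_le) hY₀card
        have hxY : x ∈ Y := by
          by_contra hx
          exact absurd (hsep Y (sep_contract_of_not_mem hxy hYsep hx)) (not_le.mpr hYcard)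
        set X := insert y Y with hX
        have hXsep : Sep G A B X := sep_contract_insert hxy hYsep
        have hXcard : X.card = k := by
          have h1 : X.card = Y.card + 1 := Finset.card_insert_of_notMem hYy
          have h2 : k ≤ X.card := hsep X hXsep
          omega
        have hxX : x ∈ X := Finset.mem_insert_of_mem hxY
        have hyX : y ∈ X := Finset.mem_insert_self _ _
        set G' := G.deleteEdges {s(x, y)} with hG'
        have hG'le : G' ≤ G := SimpleGraph.deleteEdges_le _
        have hG'E : G'.edgeSet = G.edgeSet \ {s(x, y)} := SimpleGraph.edgeSet_deleteEdges _
        have hG'N : G'.edgeSet.ncard ≤ N := by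
          have := Set.ncard_diff_singleton_lt_of_mem he (Set.toFinite _)
          rw [hG'E]
          omega
        -- a prefix of a path up to its first meeting with X avoids the edge xy
        have prefix_edges : ∀ {p t : V} (P' : G'.Walk p t), True := fun _ => trivial
        have key_prefix : ∀ {p q : V} (P : G.Walk p q), P.IsPath → (∃ t ∈ X, t ∈ P.support) →
            ∃ t ∈ X, ∃ P' : G'.Walk p t, P'.IsPath ∧
              (∀ v ∈ P'.support, v ∈ P.support) ∧
              (∀ v ∈ P'.support, v ∈ X → v = t) := by
          intro p q P hPpath hhit
          obtain ⟨t, htX, P', hsup, hedg, honce, hpath⟩ := exists_prefix X P hhit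
          have hedges : ∀ e' ∈ P'.edges, e' ∈ G'.edgeSet := by
            intro e' he'
            have heG : e' ∈ G.edgeSet := P.edges_subset_edgeSet (hedg e' he')
            rw [hG'E]
            refine ⟨heG, ?_⟩
            simp only [Set.mem_singleton_iff]
            rintro rfl
            have hx' : x ∈ P'.support := Walk.fst_mem_support_of_mem_edges P' he'
            have hy' : y ∈ P'.support := Walk.snd_mem_support_of_mem_edges P' he'
            exact hne ((honce x hx' hxX).trans (honce y hy' hyX).symm)
          refine ⟨t, htX, P'.transfer G' hedges, ?_, ?_, ?_⟩
          · exact (hpath hPpath).transfer _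
          · intro v hv
            rw [Walk.support_transfer] at hv
            exact hsup v hv
          · intro v hv
            rw [Walk.support_transfer] at hv
            exact honce v hv
        have hAX : ∀ S, Sep G' A X S → k ≤ S.card := by
          intro S hS
          refine hsep S (sep_of_paths ?_)
          intro p q P hPpath hp hq
          obtain ⟨t, htX, P', hP'path, hsup, honce⟩ :=
            key_prefix P hPpath (hXsep P hp hq)
          obtain ⟨s, hsS, hsm⟩ := hS P' hp htX
          exact ⟨s, hsS, hsup s hsm⟩
        have hXB : ∀ S, Sep G' X B S → k ≤ S.card := by
          intro S hS
          refine hsep S (sep_of_paths ?_)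
          intro p q P hPpath hp hq
          have hhit : ∃ t ∈ X, t ∈ P.reverse.support := by
            obtain ⟨t, ht, hm⟩ := hXsep P hp hq
            exact ⟨t, ht, by rwa [Walk.support_reverse, List.mem_reverse]⟩
          obtain ⟨t, htX, P', hP'path, hsup, honce⟩ :=
            key_prefix P.reverse hPpath.reverse hhit
          obtain ⟨s, hsS, hsm⟩ := hS P'.reverse htX hq
          refine ⟨s, hsS, ?_⟩
          have := hsup s (by rwa [Walk.support_reverse, List.mem_reverse] at hsm)
          rwa [Walk.support_reverse, List.mem_reverse] at this
        obtain ⟨pa, ta, Wa, hpaA, htaX, hWa, hDa⟩ := IH G' A X k hG'N hAX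
        obtain ⟨sb, qb, Wb, hsbX, hqbB, hWb, hDb⟩ := IH G' X B k hG'N hXB
        -- trim the A–X family at the first X-hit
        have trimA : ∀ i, ∃ t ∈ X, ∃ P' : G'.Walk (pa i) t, P'.IsPath ∧
            (∀ v ∈ P'.support, v ∈ (Wa i).support) ∧
            (∀ v ∈ P'.support, v ∈ X → v = t) := by
          intro i
          obtain ⟨t, htX, P', hsup, hedg, honce, hpath⟩ :=
            exists_prefix X (Wa i) ⟨ta i, htaX i, (Wa i).end_mem_support⟩
          exact ⟨t, htX, P', hpath (hWa i), hsup, honce⟩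
        choose t hXt P hPpath hsupP honceP using trimA
        -- trim the X–B family at the last X-hit
        have trimB : ∀ i, ∃ s ∈ X, ∃ Q' : G'.Walk s (qb i), Q'.IsPath ∧
            (∀ v ∈ Q'.support, v ∈ (Wb i).support) ∧
            (∀ v ∈ Q'.support, v ∈ X → v = s) := by
          intro i
          have hhit : ∃ u ∈ X, u ∈ (Wb i).reverse.support := by
            refine ⟨sb i, hsbX i, ?_⟩
            rw [Walk.support_reverse, List.mem_reverse]
            exact (Wb i).start_mem_support
          obtain ⟨s, hsX, Q'', hsup, hedg, honce, hpath⟩ :=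
            exists_prefix X (Wb i).reverse hhit
          refine ⟨s, hsX, Q''.reverse, (hpath (hWb i).reverse).reverse, ?_, ?_⟩
          · intro v hv
            rw [Walk.support_reverse, List.mem_reverse] at hv
            have h2 := hsup v hv
            rwa [Walk.support_reverse, List.mem_reverse] at h2
          · intro v hv hvX
            rw [Walk.support_reverse, List.mem_reverse] at hv
            exact honce v hv hvX
        choose s hXs Q hQpath hsupQ honceQ using trimB
        have htinj : Function.Injective t := by
          intro i j hij
          by_contra hij'
          exact hDa i j hij' (t i) (hsupP i _ (Walk.end_mem_support _))
            (mem_of_eq (hsupP j _ (Walk.end_mem_support _)) hij.symm)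
        have hsinj : Function.Injective s := by
          intro i j hij
          by_contra hij'
          exact hDb i j hij' (s i) (hsupQ i _ (Walk.start_mem_support _))
            (mem_of_eq (hsupQ j _ (Walk.start_mem_support _)) hij.symm)
        have hbij1 : Function.Bijective (fun i => (⟨t i, hXt i⟩ : ↑X)) := by
          rw [Fintype.bijective_iff_injective_and_card]
          constructor
          · intro i j hij
            exact htinj (congrArg Subtype.val hij)
          · rw [Fintype.card_coe, hXcard, Fintype.card_fin]
        have hbij2 : Function.Bijective (fun i => (⟨s i, hXs i⟩ : ↑X)) := by
          rw [Fintype.bijective_iff_injective_and_card]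
          constructor
          · intro i j hij
            exact hsinj (congrArg Subtype.val hij)
          · rw [Fintype.card_coe, hXcard, Fintype.card_fin]
        set e₁ := Equiv.ofBijective _ hbij1 with he₁
        set e₂ := Equiv.ofBijective _ hbij2 with he₂
        set σ : Fin k → Fin k := fun i => e₂.symm (e₁ i) with hσ
        have hσinj : Function.Injective σ :=
          fun i j hij => e₁.injective (e₂.symm.injective hij)
        have hmatch : ∀ i, s (σ i) = t i := by
          intro i
          have := e₂.apply_symm_apply (e₁ i)
          exact congrArg Subtype.val this
        have KEY : ∀ i j v, v ∈ (P i).support → v ∈ (Q j).support →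
            v = t i ∧ t i = s j := by
          intro i j v hvP hvQ
          by_cases hvX : v ∈ X
          · have h1 := honceP i v hvP hvX
            have h2 := honceQ j v hvQ hvX
            refine ⟨h1, ?_⟩
            rw [← h1]
            exact h2
          · exfalso
            have hvt : v ≠ t i := fun hh => hvX (by rw [hh]; exact hXt i)
            have hvs : v ≠ s j := fun hh => hvX (by rw [hh]; exact hXs j)
            have hcross : ∀ e' ∈ (((P i).takeUntil v hvP).append
                ((Q j).dropUntil v hvQ)).edges, e' ∈ G.edgeSet := fun e' he' =>
              SimpleGraph.edgeSet_mono hG'le (Walk.edges_subset_edgeSet _ he')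
            obtain ⟨s₀, hs₀X, hs₀m⟩ := hXsep ((((P i).takeUntil v hvP).append
              ((Q j).dropUntil v hvQ)).transfer G hcross) (hpaA i) (hqbB j)
            rw [Walk.support_transfer, Walk.mem_support_append_iff] at hs₀m
            rcases hs₀m with hm | hm
            · have hst : s₀ = t i :=
                honceP i s₀ (Walk.support_takeUntil_subset _ _ hm) hs₀X
              exact end_not_mem_takeUntil (hPpath i) hvP hvt (hst ▸ hm)
            · have hss : s₀ = s j :=
                honceQ j s₀ (Walk.support_dropUntil_subset _ _ hm) hs₀X
              exact start_not_mem_dropUntil (hQpath j) hvQ hvs (hss ▸ hm)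
        set glue : ∀ i, G'.Walk (pa i) (qb (σ i)) :=
          fun i => (P i).append ((Q (σ i)).copy (hmatch i) rfl) with hglue
        have hglue_mem : ∀ i v, v ∈ (glue i).support ↔
            v ∈ (P i).support ∨ v ∈ (Q (σ i)).support := by
          intro i v
          rw [hglue, Walk.mem_support_append_iff, Walk.support_copy]
        have hgluepath : ∀ i, (glue i).IsPath := by
          intro i
          rw [Walk.isPath_def, hglue, Walk.support_append, Walk.support_copy]
          rw [List.nodup_append]
          refine ⟨(hPpath i).support_nodup, ?_, ?_⟩
          · have := (hQpath (σ i)).support_nodup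
            rw [(Q (σ i)).support_eq_cons] at this
            exact (List.nodup_cons.mp this).2
          · intro v hv v' hv' hvv; subst v'
            have hvQ : v ∈ (Q (σ i)).support := List.mem_of_mem_tail hv'
            obtain ⟨h1, h2⟩ := KEY i (σ i) v hv hvQ
            have : v = s (σ i) := by rw [h1, ← h2]
            exact start_not_mem_tail (hQpath (σ i)) (this ▸ hv')
        refine conn_mono_graph hG'le ⟨pa, fun i => qb (σ i), glue, hpaA,
          fun i => hqbB (σ i), hgluepath, ?_⟩
        intro i j hij v hv hw
        rw [hglue_mem] at hv hw
        rcases hv with hv | hv <;> rcases hw with hw | hw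
        · exact hDa i j hij v (hsupP i v hv) (hsupP j v hw)
        · obtain ⟨_, h2⟩ := KEY i (σ j) v hv hw
          exact hij (htinj (h2.trans (hmatch j)))
        · obtain ⟨_, h2⟩ := KEY j (σ i) v hw hv
          exact hij (htinj (h2.trans (hmatch i)).symm)
        · exact hDb (σ i) (σ j) (fun hh => hij (hσinj hh)) v (hsupQ _ v hv) (hsupQ _ v hw)

/-- `G` with the two vertices `a, b` (i.e. all their incident edges) removed. -/
def cut (G : SimpleGraph V) (a b : V) : SimpleGraph V where
  Adj u v := G.Adj u v ∧ u ≠ a ∧ u ≠ b ∧ v ≠ a ∧ v ≠ b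
  symm := ⟨by
    intro u v ⟨h, h1, h2, h3, h4⟩
    exact ⟨h.symm, h3, h4, h1, h2⟩⟩
  loopless := ⟨fun u h => G.irrefl h.1⟩

lemma cut_le {G : SimpleGraph V} {a b : V} : cut G a b ≤ G := fun _ _ h => h.1

lemma cut_avoid {G : SimpleGraph V} {a b : V} :
    ∀ {p q : V} (w : (cut G a b).Walk p q), p ≠ a → p ≠ b →
      ∀ v ∈ w.support, v ≠ a ∧ v ≠ b := by
  intro p q w
  induction w with
  | nil =>
    intro h1 h2 v hv
    simp only [Walk.support_nil, List.mem_singleton] at hv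
    exact hv ▸ ⟨h1, h2⟩
  | cons h w ih =>
    intro h1 h2 v hv
    rcases (by simpa using hv) with rfl | hv'
    · exact ⟨h1, h2⟩
    · exact ih h.2.2.2.1 h.2.2.2.2 v hv'

lemma walk_to_cut {G : SimpleGraph V} {a b : V} :
    ∀ {p q : V} (w : G.Walk p q), (∀ v ∈ w.support, v ≠ a ∧ v ≠ b) →
    ∃ w' : (cut G a b).Walk p q, ∀ v ∈ w'.support, v ∈ w.support := by
  intro p q w
  induction w with
  | nil => intro _; exact ⟨Walk.nil, by simp⟩
  | @cons u z q h w ih =>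
    intro hav
    obtain ⟨w', hw'⟩ := ih (fun v hv => hav v (by simp [hv]))
    have hu := hav u (by simp)
    have hz := hav z (by simp [Walk.start_mem_support])
    refine ⟨Walk.cons (show (cut G a b).Adj u z from ⟨h, hu.1, hu.2, hz.1, hz.2⟩) w', ?_⟩
    intro v hv
    rcases (by simpa using hv) with rfl | hv'
    · simp
    · simp [hw' v hv']

lemma path_decomp {G : SimpleGraph V} {a b : V} (hab : a ≠ b) (hnadj : ¬ G.Adj a b)
    (P : G.Walk a b) (hP : P.IsPath) :
    ∃ (z z₂ : V) (_ : G.Adj a z) (_ : G.Adj b z₂) (R : G.Walk z z₂),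
      (∀ v ∈ R.support, v ≠ a ∧ v ≠ b) ∧ (∀ v ∈ R.support, v ∈ P.support) := by
  cases P with
  | nil => exact absurd rfl hab
  | @cons _ z _ adj₁ P₂ =>
    rw [Walk.cons_isPath_iff] at hP
    obtain ⟨hP₂path, haP₂⟩ := hP
    cases h : P₂.reverse with
    | nil => exact absurd adj₁ hnadj
    | @cons _ z₂ _ adj₂ P₃ =>
      have hP₃mem : ∀ v ∈ P₃.support, v ∈ P₂.support := by
        intro v hv
        have : v ∈ P₂.reverse.support := by rw [h]; simp [hv]
        rwa [Walk.support_reverse, List.mem_reverse] at this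
      have hbP₃ : b ∉ P₃.support := by
        have hrev : P₂.reverse.IsPath := hP₂path.reverse
        rw [h, Walk.cons_isPath_iff] at hrev
        exact hrev.2
      refine ⟨z, z₂, adj₁, adj₂, P₃.reverse, ?_, ?_⟩
      · intro v hv
        rw [Walk.support_reverse, List.mem_reverse] at hv
        constructor
        · intro hva
          exact haP₂ (hva ▸ hP₃mem v hv)
        · intro hvb
          exact hbP₃ (hvb ▸ hv)
      · intro v hv
        rw [Walk.support_reverse, List.mem_reverse] at hv
        simp [hP₃mem v hv]

theorem vertex_menger {G : SimpleGraph V} {a b : V} (hab : a ≠ b) (hnadj : ¬ G.Adj a b)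
    {n : ℕ} (hno : ¬ HasDisjointPaths G a b (n + 1)) :
    ∃ S : Finset V, S.card ≤ n ∧ a ∉ S ∧ b ∉ S ∧
      ∀ (w : G.Walk a b), ∃ s ∈ S, s ∈ w.support := by
  classical
  set G' := cut G a b with hG'def
  set A : Finset V := Finset.univ.filter (fun v => G.Adj a v) with hAdef
  set B : Finset V := Finset.univ.filter (fun v => G.Adj b v) with hBdef
  have hAmem : ∀ v, v ∈ A ↔ G.Adj a v := by intro v; simp [hAdef]
  have hBmem : ∀ v, v ∈ B ↔ G.Adj b v := by intro v; simp [hBdef]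
  have hAa : ∀ v ∈ A, v ≠ a := fun v hv h => G.irrefl (h ▸ (hAmem v).mp hv)
  have hAb : ∀ v ∈ A, v ≠ b := fun v hv h => hnadj (h ▸ (hAmem v).mp hv)
  have hsmall : ∃ S : Finset V, Sep G' A B S ∧ S.card ≤ n := by
    by_contra hbig
    push_neg at hbig
    have hconn := menger (G'.edgeSet.ncard) G' A B (n + 1) le_rfl
      (fun S hS => hbig S hS)
    obtain ⟨p, q, W, hpA, hqB, hWp, hWD⟩ := hconn
    apply hno
    have havoidW : ∀ i, ∀ v ∈ (W i).support, v ≠ a ∧ v ≠ b :=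
      fun i => cut_avoid (W i) (hAa _ (hpA i)) (hAb _ (hpA i))
    have hWG : ∀ i, ∀ e ∈ (W i).edges, e ∈ G.edgeSet :=
      fun i e he => (SimpleGraph.edgeSet_mono cut_le) ((W i).edges_subset_edgeSet he)
    set inner : ∀ i, G.Walk (p i) (q i) := fun i => (W i).transfer G (hWG i) with hin
    have hinner_sup : ∀ i, (inner i).support = (W i).support :=
      fun i => Walk.support_transfer _ _
    set WW : Fin (n + 1) → G.Walk a b := fun i =>
      Walk.cons ((hAmem _).mp (hpA i)) ((inner i).concat ((hBmem _).mp (hqB i)).symm)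
      with hWW
    have hsupWW : ∀ i v, v ∈ (WW i).support ↔ (v = a ∨ v = b ∨ v ∈ (W i).support) := by
      intro i v
      rw [hWW]
      simp only [Walk.support_cons, List.mem_cons, Walk.support_concat,
        List.concat_eq_append, List.mem_append, List.mem_singleton, hinner_sup]
      tauto
    refine ⟨WW, ?_, ?_⟩
    · intro i
      rw [hWW, Walk.isPath_def]
      simp only [Walk.support_cons, Walk.support_concat, List.concat_eq_append,
        hinner_sup]
      rw [List.nodup_cons, List.nodup_append]
      refine ⟨?_, (hWp i).support_nodup, by simp, ?_⟩
      · intro hmem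
        rw [List.mem_append] at hmem
        rcases hmem with hmem | hmem
        · exact (havoidW i a hmem).1 rfl
        · rw [List.mem_singleton] at hmem
          exact hab hmem
      · intro v hv v' hv' hvv
        rw [List.mem_singleton] at hv'
        rw [hv'] at hvv
        exact (havoidW i v hv).2 hvv
    · intro i j hij x hx hy
      rw [hsupWW] at hx hy
      rcases hx with rfl | rfl | hx
      · exact Or.inl rfl
      · exact Or.inr rfl
      · rcases hy with h | h | hy
        · exact absurd h (havoidW i x hx).1
        · exact absurd h (havoidW i x hx).2
        · exact absurd hy (fun hy' => hWD i j hij x hx hy')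
  obtain ⟨S, hSsep, hScard⟩ := hsmall
  set S' := (S.erase a).erase b with hS'def
  have hS'sub : S' ⊆ S := fun v hv =>
    Finset.mem_of_mem_erase (Finset.mem_of_mem_erase hv)
  have hS'sep : Sep G' A B S' := by
    intro p q w hp hq
    obtain ⟨s, hs, hm⟩ := hSsep w hp hq
    have := cut_avoid w (hAa _ hp) (hAb _ hp) s hm
    exact ⟨s, by rw [hS'def]; exact Finset.mem_erase.mpr ⟨this.2,
      Finset.mem_erase.mpr ⟨this.1, hs⟩⟩, hm⟩
  refine ⟨S', le_trans (le_trans (Finset.card_erase_le) (Finset.card_erase_le)) hScard,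
    fun h => (Finset.mem_erase.mp (Finset.mem_of_mem_erase h)).1 rfl,
    fun h => (Finset.mem_erase.mp h).1 rfl, ?_⟩
  intro w
  have hPpath : w.bypass.IsPath := Walk.bypass_isPath w
  obtain ⟨z, z₂, hz, hz₂, R, havR, hmemR⟩ := path_decomp hab hnadj w.bypass hPpath
  obtain ⟨R', hR'⟩ := walk_to_cut R havR
  obtain ⟨s, hs, hm⟩ := hS'sep R' ((hAmem z).mpr hz) ((hBmem z₂).mpr hz₂)
  exact ⟨s, hs, Walk.support_bypass_subset _ (hmemR s (hR' s hm))⟩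

end Stmt12

/-- adding to `H` any set `F` of pairs whose endpoints are
`k`-connected in `H` does not change the maximum number `r ≤ k - 1` of internally
vertex-disjoint paths between two non-adjacent vertices `v₁, v₂`. -/
theorem stmt_12 {V : Type*} [Fintype V] [DecidableEq V] (H : SimpleGraph V)
    (k r : ℕ) (hk : 1 ≤ k) (hr : r + 1 ≤ k)
    (v₁ v₂ : V) (hne : v₁ ≠ v₂) (hadj : ¬ H.Adj v₁ v₂)
    (hmax₁ : HasDisjointPaths H v₁ v₂ r)
    (hmax₂ : ¬ HasDisjointPaths H v₁ v₂ (r + 1))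
    (F : Set (Sym2 V))
    (hF : ∀ e ∈ F, ∀ u w : V, e = s(u, w) → HasDisjointPaths H u w k) :
    HasDisjointPaths (SimpleGraph.fromEdgeSet (H.edgeSet ∪ F)) v₁ v₂ r ∧
    ¬ HasDisjointPaths (SimpleGraph.fromEdgeSet (H.edgeSet ∪ F)) v₁ v₂ (r + 1) := by
  classical
  set G₂ := SimpleGraph.fromEdgeSet (H.edgeSet ∪ F) with hG₂
  have hle : H ≤ G₂ := by
    intro u v huv
    rw [hG₂, SimpleGraph.fromEdgeSet_adj]
    exact ⟨Or.inl huv, huv.ne⟩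
  constructor
  · obtain ⟨P, hP, hD⟩ := hmax₁
    refine ⟨fun i => (P i).transfer G₂
      (fun e he => SimpleGraph.edgeSet_mono hle ((P i).edges_subset_edgeSet he)),
      fun i => (hP i).transfer _, ?_⟩
    intro i j hij x hx hy
    rw [SimpleGraph.Walk.support_transfer] at hx hy
    exact hD hij x hx hy
  · intro hcon
    obtain ⟨S, hScard, haS, hbS, hSsep⟩ := Stmt12.vertex_menger hne hadj hmax₂
    have hrepl : ∀ (u w : V) (W : G₂.Walk u w), (∀ v ∈ W.support, v ∉ S) →
        ∃ W' : H.Walk u w, ∀ v ∈ W'.support, v ∉ S := by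
      intro u w W
      induction W with
      | nil => intro h; exact ⟨SimpleGraph.Walk.nil, by simpa using h⟩
      | @cons u z w adj W ih =>
        intro h
        obtain ⟨W', hW'⟩ := ih (fun v hv => h v (by simp [hv]))
        have huS : u ∉ S := h u (by simp)
        have hzS : z ∉ S := h z (by simp [SimpleGraph.Walk.start_mem_support])
        have hadj2 := adj
        rw [hG₂, SimpleGraph.fromEdgeSet_adj] at hadj2
        obtain ⟨hmem, hne2⟩ := hadj2
        rcases hmem with hH | hFm
        · refine ⟨SimpleGraph.Walk.cons (H.mem_edgeSet.mp hH) W', ?_⟩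
          intro v hv
          rcases (by simpa using hv : v = u ∨ v ∈ W'.support) with rfl | hv'
          · exact huS
          · exact hW' v hv'
        · obtain ⟨Q, hQ, hQD⟩ := hF s(u, z) hFm u z rfl
          have hex : ∃ i, ∀ v ∈ (Q i).support, v ∉ S := by
            by_contra hall
            push_neg at hall
            choose g hg1 hg2 using hall
            have ginj : Function.Injective g := by
              intro i j hij
              by_contra hij'
              rcases hQD hij' (g i) (hg1 i) (Stmt12.mem_of_eq (hg1 j) hij.symm)
                with hh | hh
              · exact huS (hh ▸ hg2 i)
              · exact hzS (hh ▸ hg2 i)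
            have hcard : k ≤ S.card := by
              have h1 : (Finset.univ : Finset (Fin k)).card ≤ S.card :=
                Finset.card_le_card_of_injOn g (fun i _ => hg2 i)
                  (fun i _ j _ hgg => ginj hgg)
              simpa using h1
            omega
          obtain ⟨i, hi⟩ := hex
          refine ⟨(Q i).append W', ?_⟩
          intro v hv
          rw [SimpleGraph.Walk.mem_support_append_iff] at hv
          rcases hv with hv | hv
          · exact hi v hv
          · exact hW' v hv
    obtain ⟨P, hP, hD⟩ := hcon
    have hhit : ∀ i, ∃ s_ ∈ S, s_ ∈ (P i).support := by
      intro i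
      by_contra hnos
      push_neg at hnos
      obtain ⟨W', hW'⟩ := hrepl v₁ v₂ (P i) (fun v hv hvS => hnos _ hvS hv)
      obtain ⟨s_, hs_, hm⟩ := hSsep W'
      exact hW' s_ hm hs_
    choose g hg1 hg2 using hhit
    have ginj : Function.Injective g := by
      intro i j hij
      by_contra hij'
      rcases hD hij' (g i) (hg2 i) (Stmt12.mem_of_eq (hg2 j) hij.symm) with hh | hh
      · exact haS (hh ▸ hg1 i)
      · exact hbS (hh ▸ hg1 i)
    have hbig : r + 1 ≤ S.card := by
      have h1 : (Finset.univ : Finset (Fin (r + 1))).card ≤ S.card :=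
        Finset.card_le_card_of_injOn g (fun i _ => hg1 i) (fun i _ j _ hgg => ginj hgg)
      simpa using h1
    omega
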